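/- Every submodular function f: {0,1}^n → [0,1] is 2-self-bounding; that is, for every x ∈ {0,1}^n and i ∈ [n], f(x) − min(f(x_{i←0}), f(x_{i←1})) ≤ 1, and Σ_{i=1}^n (f(x) − min(f(x_{i←0}), f(x_{i←1}))) ≤ 2·f(x). -/
import Mathlib

noncomputable section

lemma zero_telescope {n : ℕ} (f : (Fin n → Bool) → ℝ)
    (hsub : ∀ x y : Fin n → Bool, f (x ⊔ y) + f (x ⊓ y) ≤ f x + f y)
    (x : Fin n → Bool) (T : Finset (Fin n)) :
    ∑ i ∈ T, (f x - f (Function.update x i false)) ≤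
      f x - f (fun j => if j ∈ T then false else x j) := by
  classical
  induction T using Finset.induction_on with
  | empty => simp
  | @insert a s ha ih =>
    have hsup : (fun j => if j ∈ s then false else x j) ⊔ Function.update x a false = x := by
      funext j
      by_cases hj : j = a
      · subst hj
        simp [Pi.sup_apply, Function.update, ha]
      · by_cases hjs : j ∈ s <;> simp [Pi.sup_apply, Function.update, hj, hjs]
    have hinf : (fun j => if j ∈ s then false else x j) ⊓ Function.update x a false
        = (fun j => if j ∈ insert a s then false else x j) := by
      funext j
      by_cases hj : j = a
      · subst hj
        simp [Pi.inf_apply, Function.update, ha]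
      · by_cases hjs : j ∈ s <;> simp [Pi.inf_apply, Function.update, hj, hjs]
    have key := hsub (fun j => if j ∈ s then false else x j) (Function.update x a false)
    rw [hsup, hinf] at key
    rw [Finset.sum_insert ha]
    linarith

lemma one_telescope {n : ℕ} (f : (Fin n → Bool) → ℝ)
    (hsub : ∀ x y : Fin n → Bool, f (x ⊔ y) + f (x ⊓ y) ≤ f x + f y)
    (x : Fin n → Bool) (T : Finset (Fin n)) :
    ∑ i ∈ T, (f x - f (Function.update x i true)) ≤
      f x - f (fun j => if j ∈ T then true else x j) := by
  classical
  induction T using Finset.induction_on with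
  | empty => simp
  | @insert a s ha ih =>
    have hsup : (fun j => if j ∈ s then true else x j) ⊔ Function.update x a true
        = (fun j => if j ∈ insert a s then true else x j) := by
      funext j
      by_cases hj : j = a
      · subst hj
        simp [Pi.sup_apply, Function.update, ha]
      · by_cases hjs : j ∈ s <;> simp [Pi.sup_apply, Function.update, hj, hjs]
    have hinf : (fun j => if j ∈ s then true else x j) ⊓ Function.update x a true = x := by
      funext j
      by_cases hj : j = a
      · subst hj
        simp [Pi.inf_apply, Function.update, ha]
      · by_cases hjs : j ∈ s <;> simp [Pi.inf_apply, Function.update, hj, hjs]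
    have key := hsub (fun j => if j ∈ s then true else x j) (Function.update x a true)
    rw [hsup, hinf] at key
    rw [Finset.sum_insert ha]
    linarith

/-- A function `f : {0,1}^n → ℝ` is `a`-self-bounding. -/
def SelfBounding (n : ℕ) (a : ℝ) (f : (Fin n → Bool) → ℝ) : Prop :=
  ∀ x : Fin n → Bool,
    (∀ i : Fin n,
      f x - min (f (Function.update x i false)) (f (Function.update x i true)) ≤ 1) ∧
    ∑ i : Fin n,
      (f x - min (f (Function.update x i false)) (f (Function.update x i true))) ≤ a * f x

theorem submodular_is_two_selfbounding (n : ℕ) (f : (Fin n → Bool) → ℝ)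
    (hf01 : ∀ x, f x ∈ Set.Icc (0 : ℝ) 1)
    (hsub : ∀ x y : Fin n → Bool, f (x ⊔ y) + f (x ⊓ y) ≤ f x + f y) :
    SelfBounding n 2 f := by
  classical
  intro x
  constructor
  · intro i
    have h1 : (0:ℝ) ≤ min (f (Function.update x i false)) (f (Function.update x i true)) :=
      le_min (hf01 _).1 (hf01 _).1
    have h2 := (hf01 x).2
    linarith
  · set d : Fin n → ℝ := fun i => f x - f (Function.update x i false) with hd
    set u : Fin n → ℝ := fun i => f x - f (Function.update x i true) with hu
    have hterm : ∀ i, f x - min (f (Function.update x i false)) (f (Function.update x i true))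
        = max (d i) (u i) := by
      intro i
      rcases le_total (f (Function.update x i false)) (f (Function.update x i true)) with h | h
      · rw [min_eq_left h, max_eq_left (by simp only [hd, hu]; linarith)]
      · rw [min_eq_right h, max_eq_right (by simp only [hd, hu]; linarith)]
    have hself : ∀ i, Function.update x i (x i) = x := fun i => Function.update_eq_self i x
    have hmax_true : ∀ i, x i = true → max (d i) (u i) = max (d i) 0 := by
      intro i hi
      have : Function.update x i true = x := by rw [← hi]; exact hself i
      simp [hu, this]
    have hmax_false : ∀ i, ¬ x i = true → max (d i) (u i) = max (u i) 0 := by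
      intro i hi
      have hxi : x i = false := by simpa using hi
      have : Function.update x i false = x := by rw [← hxi]; exact hself i
      simp [hd, this, max_comm]
    have hsplit := Finset.sum_filter_add_sum_filter_not Finset.univ (fun i => x i = true)
      (fun i => max (d i) (u i))
    have genbound : ∀ (S : Finset (Fin n)) (g : Fin n → ℝ),
        (∑ i ∈ S.filter (fun i => 0 < g i), g i
          ≤ f x) → ∑ i ∈ S, max (g i) 0 ≤ f x := by
      intro S g h
      have e : ∑ i ∈ S.filter (fun i => 0 < g i), max (g i) 0 = ∑ i ∈ S, max (g i) 0 := by
        apply Finset.sum_subset (Finset.filter_subset _ _)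
        intro i hiS hiA
        have : ¬ 0 < g i := by
          intro hgi
          exact hiA (Finset.mem_filter.mpr ⟨hiS, hgi⟩)
        exact max_eq_right (le_of_not_gt this)
      have e2 : ∑ i ∈ S.filter (fun i => 0 < g i), max (g i) 0
          = ∑ i ∈ S.filter (fun i => 0 < g i), g i := by
        apply Finset.sum_congr rfl
        intro i hi
        exact max_eq_left (le_of_lt (Finset.mem_filter.mp hi).2)
      rw [← e, e2]; exact h
    have hbound1 : ∑ i ∈ Finset.univ.filter (fun i => x i = true), max (d i) (u i) ≤ f x := by
      rw [Finset.sum_congr rfl (fun i hi => hmax_true i (Finset.mem_filter.mp hi).2)]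
      apply genbound
      calc ∑ i ∈ (Finset.univ.filter (fun i => x i = true)).filter (fun i => 0 < d i), d i
          ≤ f x - f (fun j => if j ∈ (Finset.univ.filter (fun i => x i = true)).filter
              (fun i => 0 < d i) then false else x j) := zero_telescope f hsub x _
        _ ≤ f x := by linarith [(hf01 (fun j => if j ∈ (Finset.univ.filter
              (fun i => x i = true)).filter (fun i => 0 < d i) then false else x j)).1]
    have hbound0 : ∑ i ∈ Finset.univ.filter (fun i => ¬ x i = true), max (d i) (u i) ≤ f x := by
      rw [Finset.sum_congr rfl (fun i hi => hmax_false i (Finset.mem_filter.mp hi).2)]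
      apply genbound
      calc ∑ i ∈ (Finset.univ.filter (fun i => ¬ x i = true)).filter (fun i => 0 < u i), u i
          ≤ f x - f (fun j => if j ∈ (Finset.univ.filter (fun i => ¬ x i = true)).filter
              (fun i => 0 < u i) then true else x j) := one_telescope f hsub x _
        _ ≤ f x := by linarith [(hf01 (fun j => if j ∈ (Finset.univ.filter
              (fun i => ¬ x i = true)).filter (fun i => 0 < u i) then true else x j)).1]
    calc ∑ i : Fin n, (f x - min (f (Function.update x i false)) (f (Function.update x i true)))
        = ∑ i : Fin n, max (d i) (u i) := Finset.sum_congr rfl (fun i _ => hterm i)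
      _ = ∑ i ∈ Finset.univ.filter (fun i => x i = true), max (d i) (u i)
          + ∑ i ∈ Finset.univ.filter (fun i => ¬ x i = true), max (d i) (u i) := hsplit.symm
      _ ≤ 2 * f x := by linarith
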